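/- arXiv:2402.08536 — 4 statements merged into one kernel-verified Lean document; each statement's English description precedes it below -/
import Mathlib

section
/- Let E be a Euclidean vector space and C ⊆ E a nonempty closed set that is geometrically derivable at each of its points. Then every function R defined for pairs (x, v) with x ∈ C and v ∈ T_C(x) and satisfying R(x, v) ∈ P_C(x + v) for all such pairs is a retraction on C, i.e., for all x ∈ C and v ∈ T_C(x), lim_{t → 0⁺} (R(x, t v) − (x + t v)) / t = 0. -/
open Filter Topology

/-- The (Bouligand) tangent cone to `C` at `x`: the set of `v` for which there exist
a sequence in `C` converging to `x` and positive reals `t i` with `(x i - x) / t i → v`. -/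
def bouligandTangentCone {E : Type*} [NormedAddCommGroup E] [NormedSpace ℝ E]
    (C : Set E) (x : E) : Set E :=
  {v | ∃ (xs : ℕ → E) (ts : ℕ → ℝ), (∀ i, xs i ∈ C) ∧ (∀ i, 0 < ts i) ∧
    Tendsto xs atTop (𝓝 x) ∧
    Tendsto (fun i => (ts i)⁻¹ • (xs i - x)) atTop (𝓝 v)}

lemma smul_mem_bouligandTangentCone {E : Type*} [NormedAddCommGroup E] [NormedSpace ℝ E]
    {C : Set E} {x v : E} {t : ℝ} (ht : 0 < t) (hv : v ∈ bouligandTangentCone C x) :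
    t • v ∈ bouligandTangentCone C x := by
  obtain ⟨xs, ts, hxs, hts, hlim, hdiff⟩ := hv
  refine ⟨xs, fun i => t⁻¹ * ts i, hxs, fun i => mul_pos (inv_pos.mpr ht) (hts i), hlim, ?_⟩
  have : Tendsto (fun i => t • ((ts i)⁻¹ • (xs i - x))) atTop (𝓝 (t • v)) :=
    hdiff.const_smul t
  convert this using 2 with i
  rw [mul_inv, inv_inv, mul_smul]

/-- If the nonempty closed set `C` is geometrically derivable at each of its
points, then every map `R` with `R x v ∈ P_C (x + v)` for all `x ∈ C` and `v ∈ T_C x`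
is a retraction on `C`: for all `x ∈ C` and `v ∈ T_C x`,
`(R x (t v) - (x + t v)) / t → 0` as `t → 0⁺`. -/
theorem projective_retraction_of_geometrically_derivable
    {E : Type*} [NormedAddCommGroup E] [InnerProductSpace ℝ E] [FiniteDimensional ℝ E]
    (C : Set E) (hCne : C.Nonempty) (hCcl : IsClosed C)
    (hgd : ∀ x ∈ C, ∀ v ∈ bouligandTangentCone C x,
      ∃ ε > (0 : ℝ), ∃ γ : ℝ → E,
        (∀ t ∈ Set.Icc (0 : ℝ) ε, γ t ∈ C) ∧ γ 0 = x ∧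
        Tendsto (fun t : ℝ => t⁻¹ • (γ t - γ 0)) (𝓝[>] 0) (𝓝 v))
    (R : E → E → E)
    (hR : ∀ x ∈ C, ∀ v ∈ bouligandTangentCone C x,
      R x v ∈ C ∧ ∀ w ∈ C, ‖x + v - R x v‖ ≤ ‖x + v - w‖) :
    ∀ x ∈ C, ∀ v ∈ bouligandTangentCone C x,
      Tendsto (fun t : ℝ => t⁻¹ • (R x (t • v) - (x + t • v))) (𝓝[>] 0) (𝓝 0) := by
  intro x hx v hv
  obtain ⟨ε, hε, γ, hγC, hγ0, hγlim⟩ := hgd x hx v hv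
  have hg : Tendsto (fun t : ℝ => ‖t⁻¹ • (γ t - γ 0) - v‖) (𝓝[>] 0) (𝓝 0) := by
    have := (hγlim.sub_const v).norm
    simpa using this
  refine squeeze_zero_norm' ?_ hg
  filter_upwards [self_mem_nhdsWithin, Icc_mem_nhdsGT_of_mem (by
    constructor <;> [rfl; exact hε] : (0:ℝ) ∈ Set.Ico 0 ε)] with t ht htε
  have ht0 : 0 < t := ht
  have htv : t • v ∈ bouligandTangentCone C x := smul_mem_bouligandTangentCone ht0 hv
  obtain ⟨_, hproj⟩ := hR x hx (t • v) htv
  have hbound := hproj (γ t) (hγC t htε)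
  have h1 : ‖t⁻¹ • (R x (t • v) - (x + t • v))‖ = t⁻¹ * ‖x + t • v - R x (t • v)‖ := by
    rw [norm_smul, Real.norm_eq_abs, abs_of_pos (inv_pos.mpr ht0), norm_sub_rev]
  have h2 : ‖t⁻¹ • (γ t - γ 0) - v‖ = t⁻¹ * ‖x + t • v - γ t‖ := by
    rw [hγ0]
    rw [show t⁻¹ • (γ t - x) - v = t⁻¹ • (γ t - (x + t • v)) by
      rw [smul_sub, smul_sub, smul_add, smul_smul, inv_mul_cancel₀ ht0.ne', one_smul]; abel]
    rw [norm_smul, Real.norm_eq_abs, abs_of_pos (inv_pos.mpr ht0), norm_sub_rev]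
  rw [h1, h2]
  exact mul_le_mul_of_nonneg_left hbound (by positivity)
end

section
/- Let m, n, r be positive integers with r < min{m, n}, and let X ∈ ℝ^{m×n} be nonzero with r̲ := rank X ≤ r. Suppose X = U diag(σ₁, …, σ_{r̲}, 0, …, 0) Vᵀ where U ∈ ℝ^{m×(r+1)} and V ∈ ℝ^{n×(r+1)} have orthonormal columns (UᵀU = VᵀV = I_{r+1}) and σ₁ ≥ … ≥ σ_{r̲} > 0. Then for every t₀ > 0, the matrix Z := (σ_{r̲}/t₀) U D Vᵀ, where D is the (r+1)×(r+1) block-diagonal matrix diag(0_{(r̲−1)×(r̲−1)}, [[−1, 1/2], [1/2, 0]], (3/4) I_{r−r̲}), belongs to the tangent cone to ℝ^{m×n}_{≤r} at X. -/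
open Filter Topology Matrix

/-- The determinantal variety of `m × n` real matrices of rank at most `r`. -/
def lowRankVariety (m n r : ℕ) : Set (Matrix (Fin m) (Fin n) ℝ) :=
  {A | A.rank ≤ r}

/-- The (Bouligand) tangent cone to the determinantal variety at `X`. -/
def lowRankTangentCone (m n r : ℕ) (X : Matrix (Fin m) (Fin n) ℝ) :
    Set (Matrix (Fin m) (Fin n) ℝ) :=
  {V | ∃ (Xs : ℕ → Matrix (Fin m) (Fin n) ℝ) (ts : ℕ → ℝ),
    (∀ i, Xs i ∈ lowRankVariety m n r) ∧ (∀ i, 0 < ts i) ∧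
    Tendsto Xs atTop (𝓝 X) ∧
    Tendsto (fun i => (ts i)⁻¹ • (Xs i - X)) atTop (𝓝 V)}

/-- The `(r+1) × (r+1)` block-diagonal matrix
`diag(0_{(k−1)×(k−1)}, [[−1, 1/2], [1/2, 0]], (3/4) I_{r−k})`
(indices `0, …, k−2` carry the zero block, indices `k−1, k` carry the `2 × 2` block,
and indices `k+1, …, r` carry the diagonal entries `3/4`). -/
noncomputable def blockD (r k : ℕ) : Matrix (Fin (r + 1)) (Fin (r + 1)) ℝ :=
  Matrix.of fun i j : Fin (r + 1) =>
    if (i : ℕ) = k - 1 ∧ (j : ℕ) = k - 1 then -1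
    else if ((i : ℕ) = k - 1 ∧ (j : ℕ) = k) ∨ ((i : ℕ) = k ∧ (j : ℕ) = k - 1) then 1 / 2
    else if (i : ℕ) = (j : ℕ) ∧ k + 1 ≤ (i : ℕ) then 3 / 4
    else 0

lemma aux_tendsto_div (C : ℝ) (d : ℕ) :
    Tendsto (fun i : ℕ => C / ((i : ℝ) + d)) atTop (𝓝 0) := by
  have h := (tendsto_const_div_atTop_nhds_zero_nat C).comp (tendsto_add_atTop_nat d)
  convert h using 2 with i
  simp [Function.comp]

lemma aux_rank_le (r : ℕ) (S : Matrix (Fin (r+1)) (Fin (r+1)) ℝ) (w : Fin (r+1) → ℝ)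
    (hw : w ≠ 0) (h : S *ᵥ w = 0) : S.rank ≤ r := by
  have hker : 0 < Module.finrank ℝ (LinearMap.ker S.mulVecLin) := by
    rw [Module.finrank_pos_iff_exists_ne_zero]
    exact ⟨⟨w, by simpa [Matrix.mulVecLin] using h⟩, by simpa using hw⟩
  have := LinearMap.finrank_range_add_finrank_ker S.mulVecLin
  rw [Module.finrank_pi] at this
  simp only [Fintype.card_fin] at this
  rw [Matrix.rank]
  omega

/-- with `X = U diag(σ₁, …, σ_k, 0, …, 0) Vᵀ` a (partial) SVD of the nonzero
matrix `X` of rank `k ≤ r`, for every `t₀ > 0` the matrix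
`Z = (σ_k / t₀) U diag(0_{(k−1)×(k−1)}, [[−1, 1/2], [1/2, 0]], (3/4) I_{r−k}) Vᵀ`
belongs to the tangent cone to `ℝ^{m×n}_{≤r}` at `X`. -/
theorem Z_mem_tangent_cone
    (m n r k : ℕ) (hm : 0 < m) (hn : 0 < n) (hr : 0 < r)
    (hrm : r < m) (hrn : r < n) (hk1 : 1 ≤ k) (hkr : k ≤ r)
    (U : Matrix (Fin m) (Fin (r + 1)) ℝ) (V : Matrix (Fin n) (Fin (r + 1)) ℝ)
    (hU : Uᵀ * U = 1) (hV : Vᵀ * V = 1)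
    (σ : Fin (r + 1) → ℝ)
    (hσmono : ∀ i j : Fin (r + 1), i ≤ j → σ j ≤ σ i)
    (hσpos : ∀ i : Fin (r + 1), (i : ℕ) < k → 0 < σ i)
    (hσzero : ∀ i : Fin (r + 1), k ≤ (i : ℕ) → σ i = 0)
    (X : Matrix (Fin m) (Fin n) ℝ)
    (hX : X = U * Matrix.diagonal σ * Vᵀ)
    (hrank : X.rank = k)
    (t₀ : ℝ) (ht₀ : 0 < t₀)
    (Z : Matrix (Fin m) (Fin n) ℝ)
    (hZ : Z = (σ ⟨k - 1, by omega⟩ / t₀) • (U * blockD r k * Vᵀ)) :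
    Z ∈ lowRankTangentCone m n r X := by
  have hkrr : k < r + 1 := by omega
  have hk1rr : k - 1 < r + 1 := by omega
  set kk : Fin (r + 1) := ⟨k, hkrr⟩ with hkk
  set k1 : Fin (r + 1) := ⟨k - 1, hk1rr⟩ with hk1d
  have hk1k : (k1 : ℕ) ≠ (kk : ℕ) := by simp [hkk, hk1d]; omega
  set s : ℝ := σ k1 with hsdef
  have hs : 0 < s := hσpos k1 (by simp [hk1d]; omega)
  set A : Matrix (Fin m) (Fin n) ℝ := U * blockD r k * Vᵀ with hA
  set W : Matrix (Fin m) (Fin n) ℝ := U * Matrix.single kk kk (1:ℝ) * Vᵀ with hW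
  set a : ℕ → ℝ := fun i => s / ((i : ℝ) + 2) with ha
  set b : ℕ → ℝ := fun i => s / (4 * ((i : ℝ) + 1) * ((i : ℝ) + 2)) with hb
  set S : ℕ → Matrix (Fin (r+1)) (Fin (r+1)) ℝ :=
    fun i => Matrix.diagonal σ + a i • blockD r k + b i • Matrix.single kk kk (1:ℝ)
    with hS
  have hXs : ∀ i, U * S i * Vᵀ = X + a i • A + b i • W := by
    intro i
    simp only [hS, hX, hA, hW, Matrix.add_mul, Matrix.mul_add,
      Matrix.smul_mul, Matrix.mul_smul]
  refine ⟨fun i => U * S i * Vᵀ, fun i => t₀ / ((i : ℝ) + 2), ?_, ?_, ?_, ?_⟩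
  · -- rank ≤ r
    intro i
    have hrS : (S i).rank ≤ r := by
      apply aux_rank_le r (S i)
        (Pi.single k1 (1/2 : ℝ) + Pi.single kk (-((i : ℝ) + 1)))
      · intro hcon
        have h0 := congrFun hcon kk
        have hne : k1 ≠ kk := by
          simp only [hk1d, hkk, Ne, Fin.mk.injEq]; omega
        simp only [Pi.add_apply, Pi.single_apply, if_neg (Ne.symm hne), if_pos rfl,
          if_true, Pi.zero_apply, zero_add] at h0
        have : (0:ℝ) < (i:ℝ) + 1 := by positivity
        simp only [eq_comm] at h0
        linarith [h0]
      · have hi2 : ((i : ℝ) + 2) ≠ 0 := by positivity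
        have hi1 : ((i : ℝ) + 1) ≠ 0 := by positivity
        funext j
        rw [Matrix.mulVec_add, Matrix.mulVec_single, Matrix.mulVec_single]
        show S i j k1 * (1/2) + S i j kk * (-((i:ℝ)+1)) = 0
        have hstd : ∀ c : Fin (r+1), Matrix.single kk kk (1:ℝ) j c
            = if j = kk ∧ c = kk then 1 else 0 := by
          intro c
          simp [Matrix.single, and_comm, eq_comm]
        simp only [hS, Matrix.add_apply, Matrix.smul_apply, smul_eq_mul, blockD,
          Matrix.of_apply, hstd]
        by_cases hj1 : (j : ℕ) = k - 1
        · have hjk1 : j = k1 := by apply Fin.ext; simpa [hk1d] using hj1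
          have hjkk : j ≠ kk := by simp [hkk, Fin.ext_iff, hj1]; omega
          have hσj : σ j = s := by rw [hjk1, hsdef]
          have e1 : ¬ (k = k - 1) := by omega
          have e2 : ¬ (k - 1 = k) := by omega
          have e3 : ¬ (k + 1 ≤ k - 1) := by omega
          rw [hjk1]
          simp only [hk1d, hkk, Matrix.diagonal, Matrix.of_apply, Fin.mk.injEq]
          simp only [e1, e2, e3, if_true, true_and, and_true, and_self, if_false,
            or_false, false_or, ite_true, ite_false, ha, hb]
          field_simp
          ring
        · by_cases hj2 : (j : ℕ) = k
          · have hjkk : j = kk := by apply Fin.ext; simpa [hkk] using hj2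
            have hσkk : σ kk = 0 := hσzero kk (by simp [hkk])
            have e1 : ¬ (k = k - 1) := by omega
            have e2 : ¬ (k - 1 = k) := by omega
            have e3 : ¬ (k + 1 ≤ k) := by omega
            rw [hjkk]
            simp only [hk1d, hkk, Matrix.diagonal, Matrix.of_apply, Fin.mk.injEq]
            simp only [e1, e2, e3, if_true, true_and, and_true, and_self, if_false,
              and_false, false_and, or_false, false_or, ite_true, ite_false, ha, hb]
            rw [show σ ⟨k, hkrr⟩ = 0 from hσkk]
            field_simp
            ring
          · have hjk1 : j ≠ k1 := by simp [hk1d, Fin.ext_iff]; omega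
            have hjkk : j ≠ kk := by simp [hkk, Fin.ext_iff]; omega
            simp [Matrix.diagonal, Fin.ext_iff, hk1d, hkk, hj1, hj2]
    calc (U * S i * Vᵀ).rank ≤ (U * S i).rank := Matrix.rank_mul_le_left _ _
      _ ≤ (S i).rank := Matrix.rank_mul_le_right _ _
      _ ≤ r := hrS
  · intro i
    positivity
  · -- Tendsto Xs → X
    have haT : Tendsto a atTop (𝓝 0) := by
      have := aux_tendsto_div s 2; simpa using this
    have hbT : Tendsto b atTop (𝓝 0) := by
      have h1 := aux_tendsto_div (s/4) 1
      have h2 := aux_tendsto_div 1 2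
      have := h1.mul h2
      rw [mul_zero] at this
      convert this using 2 with i
      simp only [hb, Nat.cast_ofNat, Nat.cast_one]
      field_simp
    have hT : Tendsto (fun i => X + a i • A + b i • W) atTop (𝓝 (X + (0:ℝ) • A + (0:ℝ) • W)) :=
      (tendsto_const_nhds.add (haT.smul_const A)).add (hbT.smul_const W)
    simp only [zero_smul, add_zero] at hT
    simpa only [hXs] using hT
  · -- Tendsto quotient → Z
    have key : ∀ i : ℕ, (t₀ / ((i : ℝ) + 2))⁻¹ • (U * S i * Vᵀ - X)
        = Z + (s / (4 * t₀ * ((i : ℝ) + 1))) • W := by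
      intro i
      have hi2 : ((i : ℝ) + 2) ≠ 0 := by positivity
      have hi1 : ((i : ℝ) + 1) ≠ 0 := by positivity
      rw [hXs i, hZ]
      have e1 : X + a i • A + b i • W - X = a i • A + b i • W := by abel
      rw [e1, smul_add, smul_smul, smul_smul]
      have c1 : (t₀ / ((i : ℝ) + 2))⁻¹ * a i = σ ⟨k - 1, by omega⟩ / t₀ := by
        rw [ha]
        have : σ (⟨k - 1, by omega⟩ : Fin (r+1)) = s := rfl
        rw [this]
        field_simp
      have c2 : (t₀ / ((i : ℝ) + 2))⁻¹ * b i = s / (4 * t₀ * ((i : ℝ) + 1)) := by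
        rw [hb]
        field_simp
      rw [c1, c2, hA]
    have hcT : Tendsto (fun i : ℕ => s / (4 * t₀ * ((i : ℝ) + 1))) atTop (𝓝 0) := by
      have := aux_tendsto_div (s / (4 * t₀)) 1
      convert this using 2 with i
      push_cast
      field_simp
    have hT : Tendsto (fun i : ℕ => Z + (s / (4 * t₀ * ((i : ℝ) + 1))) • W) atTop
        (𝓝 (Z + (0:ℝ) • W)) :=
      tendsto_const_nhds.add (hcT.smul_const W)
    rw [zero_smul, add_zero] at hT
    simp only [key]
    exact hT
end

section
/- Let E be a Euclidean vector space, C ⊆ E nonempty and closed, f : E → ℝ continuously differentiable, c ∈ (0, 1), x ∈ C, and v ∈ T_C(x) with ⟨∇f(x), v⟩ < 0. Let R be a retraction on C, i.e., a C-valued map on pairs (y, w) with y ∈ C, w ∈ T_C(y) such that lim_{t → 0⁺} (R(y, t w) − (y + t w))/t = 0. Then there exists α* > 0 such that for all t ∈ [0, α*], the Armijo condition f(R(x, t v)) ≤ f(x) + c t ⟨∇f(x), v⟩ holds. -/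
open Filter Topology

/-- let `f` be continuously differentiable, `c ∈ (0, 1)`, `x ∈ C`,
`v ∈ T_C x` with `⟨∇f(x), v⟩ < 0`, and `R` a retraction on `C`. Then there exists
`α* > 0` such that for all `t ∈ [0, α*]`, the Armijo condition
`f(R(x, t v)) ≤ f(x) + c t ⟨∇f(x), v⟩` holds. -/
theorem armijo_condition_holds
    {E : Type*} [NormedAddCommGroup E] [InnerProductSpace ℝ E] [FiniteDimensional ℝ E]
    (C : Set E) (hCne : C.Nonempty) (hCcl : IsClosed C)
    (f : E → ℝ) (hf : ContDiff ℝ 1 f)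
    (c : ℝ) (hc : c ∈ Set.Ioo (0 : ℝ) 1)
    (x : E) (hx : x ∈ C) (v : E) (hv : v ∈ bouligandTangentCone C x)
    (hdesc : inner ℝ (gradient f x) v < (0 : ℝ))
    (R : E → E → E)
    (hRC : ∀ y ∈ C, ∀ w ∈ bouligandTangentCone C y, R y w ∈ C)
    (hRlim : ∀ y ∈ C, ∀ w ∈ bouligandTangentCone C y,
      Tendsto (fun t : ℝ => t⁻¹ • (R y (t • w) - (y + t • w))) (𝓝[>] 0) (𝓝 0)) :
    ∃ αs > (0 : ℝ), ∀ t ∈ Set.Icc (0 : ℝ) αs,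
      f (R x (t • v)) ≤ f x + c * t * inner ℝ (gradient f x) v := by
  obtain ⟨hc0, hc1⟩ := hc
  have hdf : DifferentiableAt ℝ f x := (hf.differentiable one_ne_zero).differentiableAt
  have hinner : ∀ w : E, (inner ℝ (gradient f x) w : ℝ) = fderiv ℝ f x w := fun w => by
    rw [gradient, InnerProductSpace.toDual_symm_apply]
  -- 0 is in the tangent cone
  have h0cone : (0 : E) ∈ bouligandTangentCone C x := by
    refine ⟨fun _ => x, fun _ => 1, fun _ => hx, fun _ => one_pos, tendsto_const_nhds, ?_⟩
    simpa using (tendsto_const_nhds : Tendsto (fun _ : ℕ => (0 : E)) atTop (𝓝 0))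
  -- R x 0 = x
  have hR0 : R x 0 = x := by
    by_contra hne
    have hd : (0 : ℝ) < ‖R x 0 - x‖ := by
      rw [norm_pos_iff]; exact sub_ne_zero_of_ne hne
    have h := hRlim x hx 0 h0cone
    simp only [smul_zero, add_zero] at h
    have hn : Tendsto (fun t : ℝ => ‖t⁻¹ • (R x 0 - x)‖) (𝓝[>] 0) (𝓝 0) := by
      simpa using h.norm
    have h1 : ∀ᶠ t : ℝ in 𝓝[>] 0, ‖t⁻¹ • (R x 0 - x)‖ < ‖R x 0 - x‖ :=
      hn.eventually_lt_const hd
    have h2 : ∀ᶠ t : ℝ in 𝓝[>] 0, t < 1 :=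
      eventually_nhdsWithin_of_eventually_nhds (eventually_lt_nhds one_pos)
    have h3 : ∀ᶠ t : ℝ in 𝓝[>] 0, (0 : ℝ) < t := eventually_mem_nhdsWithin
    obtain ⟨t, ht1, ht2, ht3⟩ := (h1.and (h2.and h3)).exists
    rw [norm_smul, Real.norm_eq_abs, abs_of_pos (inv_pos.mpr ht3)] at ht1
    nlinarith [(one_lt_inv₀ ht3).mpr ht2]
  -- the curve
  set φ : ℝ → E := fun t => t⁻¹ • (R x (t • v) - (x + t • v)) with hφ
  have hφlim : Tendsto φ (𝓝[>] 0) (𝓝 0) := hRlim x hx v hv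
  set ψ : ℝ → E := fun t => v + φ t with hψ
  have hψlim : Tendsto ψ (𝓝[>] 0) (𝓝 v) := by
    simpa using tendsto_const_nhds.add hφlim
  have hpos : ∀ᶠ t : ℝ in 𝓝[>] 0, (0 : ℝ) < t := eventually_mem_nhdsWithin
  have hreq : ∀ᶠ t : ℝ in 𝓝[>] 0, R x (t • v) = x + t • ψ t := by
    filter_upwards [hpos] with t ht
    have : t • φ t = R x (t • v) - (x + t • v) := by
      rw [hφ]; simp [smul_smul, mul_inv_cancel₀ (ne_of_gt ht)]
    rw [hψ, smul_add, this]; abel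
  -- r t → x
  have hrlim : Tendsto (fun t : ℝ => x + t • ψ t) (𝓝[>] 0) (𝓝 x) := by
    have : Tendsto (fun t : ℝ => t • ψ t) (𝓝[>] 0) (𝓝 ((0 : ℝ) • v)) :=
      (tendsto_nhdsWithin_of_tendsto_nhds tendsto_id).smul hψlim
    simpa using tendsto_const_nhds.add this
  -- little-o from differentiability
  have hder := hdf.hasFDerivAt.isLittleO
  have h2 := hder.comp_tendsto hrlim
  have h3 : (fun t : ℝ => (x + t • ψ t) - x) =O[𝓝[>] 0] (fun t : ℝ => t) := by
    rw [Asymptotics.isBigO_iff]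
    refine ⟨‖v‖ + 1, ?_⟩
    have hψn : ∀ᶠ t : ℝ in 𝓝[>] 0, ‖ψ t‖ < ‖v‖ + 1 :=
      (hψlim.norm).eventually_lt_const (by linarith [norm_nonneg v])
    filter_upwards [hψn] with t ht
    have : (x + t • ψ t) - x = t • ψ t := by abel
    rw [this, norm_smul]
    calc ‖t‖ * ‖ψ t‖ ≤ ‖t‖ * (‖v‖ + 1) := by
          exact mul_le_mul_of_nonneg_left (le_of_lt ht) (norm_nonneg t)
      _ = (‖v‖ + 1) * ‖t‖ := by ring
  have h4 := (h2.trans_isBigO h3).tendsto_div_nhds_zero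
  -- fderiv (ψ t) → fderiv v
  have h5 : Tendsto (fun t : ℝ => fderiv ℝ f x (ψ t)) (𝓝[>] 0)
      (𝓝 (fderiv ℝ f x v)) := ((fderiv ℝ f x).continuous.tendsto v).comp hψlim
  have key : Tendsto (fun t : ℝ => t⁻¹ * (f (R x (t • v)) - f x)) (𝓝[>] 0)
      (𝓝 (fderiv ℝ f x v)) := by
    have := h4.add h5
    rw [zero_add] at this
    refine this.congr' ?_
    filter_upwards [hpos, hreq] with t ht hr
    have ht' : t ≠ 0 := ne_of_gt ht
    rw [hr]
    have hfd : fderiv ℝ f x ((x + t • ψ t) - x) = t * fderiv ℝ f x (ψ t) := by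
      have : (x + t • ψ t) - x = t • ψ t := by abel
      rw [this, map_smul]; simp
    field_simp [hfd]
    simp only [Function.comp_apply, hfd]
    ring
  -- conclude
  set d : ℝ := inner ℝ (gradient f x) v with hd
  have hdf' : fderiv ℝ f x v = d := (hinner v).symm
  rw [hdf'] at key
  have hcd : d < c * d := by nlinarith
  have hev : ∀ᶠ t : ℝ in 𝓝[>] 0, t⁻¹ * (f (R x (t • v)) - f x) < c * d :=
    key.eventually_lt_const hcd
  obtain ⟨u, hu, hsub⟩ := mem_nhdsGT_iff_exists_Ioo_subset.mp hev
  have hu0 : (0 : ℝ) < u := hu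
  refine ⟨u / 2, by linarith, fun t ht => ?_⟩
  obtain ⟨ht0, htu⟩ := ht
  rcases eq_or_lt_of_le ht0 with h | h
  · rw [← h]
    simp [hR0]
  · have htmem : t ∈ Set.Ioo (0 : ℝ) u := ⟨h, by linarith⟩
    have := hsub htmem
    simp only [Set.mem_setOf_eq] at this
    have h1 : t⁻¹ * (f (R x (t • v)) - f x) < c * d := this
    have h2 : f (R x (t • v)) - f x < t * (c * d) := by
      have := (mul_lt_mul_iff_right₀ h).mpr h1
      rwa [← mul_assoc, mul_inv_cancel₀ (ne_of_gt h), one_mul] at this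
    have h3 : c * t * d = t * (c * d) := by ring
    linarith
end

section
/- Let E be a Euclidean vector space, C ⊆ E nonempty and closed, f : E → ℝ continuously differentiable, β, c ∈ (0, 1), x ∈ C, v ∈ T_C(x) with ⟨∇f(x), v⟩ < 0, and R a retraction on C. Suppose α* > 0 is such that f(R(x, t v)) ≤ f(x) + c t ⟨∇f(x), v⟩ for all t ∈ [0, α*]. Then for every initial step size α > 0, the smallest i ∈ ℕ such that f(R(x, α βⁱ v)) ≤ f(x) + c α βⁱ ⟨∇f(x), v⟩ exists and satisfies i ≤ max{0, ⌈ln(α*/α)/ln β⌉}, and the accepted step size ᾱ := α βⁱ satisfies ᾱ ≥ min{α, α* β}. -/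
open Filter Topology

/-- under an Armijo guarantee on `[0, α*]`, the backtracking line search with
initial step size `α > 0` and contraction factor `β ∈ (0, 1)` terminates: the smallest
`i ∈ ℕ` whose step `α βⁱ` satisfies the Armijo condition exists, it is at most
`max {0, ⌈ln(α*/α)/ln β⌉}`, and the accepted step size `α βⁱ` is at least
`min {α, α* β}`. -/
theorem backtracking_terminates
    {E : Type*} [NormedAddCommGroup E] [InnerProductSpace ℝ E] [FiniteDimensional ℝ E]
    (C : Set E) (hCne : C.Nonempty) (hCcl : IsClosed C)
    (f : E → ℝ) (hf : ContDiff ℝ 1 f)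
    (β c : ℝ) (hβ : β ∈ Set.Ioo (0 : ℝ) 1) (hc : c ∈ Set.Ioo (0 : ℝ) 1)
    (x : E) (hx : x ∈ C) (v : E) (hv : v ∈ bouligandTangentCone C x)
    (hdesc : inner ℝ (gradient f x) v < (0 : ℝ))
    (R : E → E → E)
    (hRC : ∀ y ∈ C, ∀ w ∈ bouligandTangentCone C y, R y w ∈ C)
    (hRlim : ∀ y ∈ C, ∀ w ∈ bouligandTangentCone C y,
      Tendsto (fun t : ℝ => t⁻¹ • (R y (t • w) - (y + t • w))) (𝓝[>] 0) (𝓝 0))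
    (αs : ℝ) (hαs : 0 < αs)
    (hArmijo : ∀ t ∈ Set.Icc (0 : ℝ) αs,
      f (R x (t • v)) ≤ f x + c * t * inner ℝ (gradient f x) v)
    (α : ℝ) (hα : 0 < α) :
    ∃ i : ℕ,
      (f (R x ((α * β ^ i) • v)) ≤ f x + c * (α * β ^ i) * inner ℝ (gradient f x) v) ∧
      (∀ j : ℕ,
        (f (R x ((α * β ^ j) • v)) ≤ f x + c * (α * β ^ j) * inner ℝ (gradient f x) v) →
        i ≤ j) ∧
      (i : ℤ) ≤ max 0 ⌈Real.log (αs / α) / Real.log β⌉ ∧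
      min α (αs * β) ≤ α * β ^ i := by
  classical
  have hβ0 := hβ.1
  have hβ1 := hβ.2
  have hlogβ : Real.log β < 0 := Real.log_neg hβ0 hβ1
  set P : ℕ → Prop := fun i =>
    f (R x ((α * β ^ i) • v)) ≤ f x + c * (α * β ^ i) * inner ℝ (gradient f x) v with hP
  set n : ℕ := (max 0 ⌈Real.log (αs / α) / Real.log β⌉).toNat with hn
  have hnZ : (n : ℤ) = max 0 ⌈Real.log (αs / α) / Real.log β⌉ := by
    rw [hn, Int.toNat_of_nonneg (le_max_left _ _)]
  have hnr : Real.log (αs / α) / Real.log β ≤ (n : ℝ) := by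
    have h1 : (⌈Real.log (αs / α) / Real.log β⌉ : ℝ) ≤ ((n : ℤ) : ℝ) := by
      exact_mod_cast hnZ ▸ le_max_right _ _
    calc Real.log (αs / α) / Real.log β ≤ (⌈Real.log (αs / α) / Real.log β⌉ : ℝ) :=
          Int.le_ceil _
      _ ≤ (n : ℝ) := by exact_mod_cast h1
  have hstep : α * β ^ n ≤ αs := by
    have hmul : (n : ℝ) * Real.log β ≤ Real.log (αs / α) := by
      have := mul_le_mul_of_nonpos_right hnr hlogβ.le
      rwa [div_mul_cancel₀ _ (ne_of_lt hlogβ)] at this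
    have hlogpow : Real.log (β ^ n) ≤ Real.log (αs / α) := by
      rwa [Real.log_pow]
    have hβn : β ^ n ≤ αs / α := by
      have := Real.exp_le_exp.mpr hlogpow
      rwa [Real.exp_log (pow_pos hβ0 n), Real.exp_log (div_pos hαs hα)] at this
    calc α * β ^ n ≤ α * (αs / α) := by
          exact mul_le_mul_of_nonneg_left hβn hα.le
      _ = αs := by field_simp
  have hPn : P n := hArmijo _ ⟨by positivity, hstep⟩
  have hex : ∃ i, P i := ⟨n, hPn⟩
  refine ⟨Nat.find hex, Nat.find_spec hex, fun j hj => Nat.find_le hj, ?_, ?_⟩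
  · rw [← hnZ]
    exact_mod_cast Nat.find_le hPn
  · rcases Nat.eq_zero_or_pos (Nat.find hex) with h0 | hpos
    · rw [h0]
      simpa using min_le_left α (αs * β)
    · obtain ⟨k, hk⟩ := Nat.exists_eq_succ_of_ne_zero hpos.ne'
      have hnotPk : ¬ P k := Nat.find_min hex (by omega)
      have hgt : αs < α * β ^ k := by
        by_contra h
        exact hnotPk (hArmijo _ ⟨by positivity, not_lt.mp h⟩)
      have : αs * β < α * β ^ (k + 1) := by
        rw [pow_succ, ← mul_assoc]
        exact mul_lt_mul_of_pos_right hgt hβ0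
      rw [hk]
      exact le_trans (min_le_right _ _) this.le
end
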